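/- arXiv:1605.09576 — 6 statements merged into one kernel-verified Lean document; each statement's English description precedes it below -/
import Mathlib

section
/- Let D = {(p,q,θ₁,θ₂) ∈ ℝ⁴ : |p| < π/2 and |q| < π/2} and define f : D → ℝ⁴ by f(p,q,θ₁,θ₂) = (R₁cos θ₁, R₁sin θ₁, R₂cos θ₂, R₂sin θ₂), where R₁ = (tan p + tan q)/2 and R₂ = (tan p − tan q)/2. Then at every point x = (p,q,θ₁,θ₂) ∈ D and for all v = (v₁,v₂,v₃,v₄), w = (w₁,w₂,w₃,w₄) ∈ ℝ⁴, one has cos²p · cos²q · B(Df_x(v), Df_x(w)) = (1/2)(v₁w₂ + v₂w₁) + (1/4)sin²(p+q)·v₃w₃ − (1/4)sin²(p−q)·v₄w₄, where Df_x denotes the Fréchet derivative of f at x. In other words, f pulls back the flat neutral metric B to the conformal multiple Ω⁻²·(dp dq + ¼sin²(p+q)dθ₁² − ¼sin²(p−q)dθ₂²) with conformal factor Ω = cos p cos q, which vanishes exactly when p = π/2 or |q| = π/2. -/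
/-- The flat neutral (signature (2,2)) bilinear form on ℝ⁴. -/
def neutralB (x y : ℝ × ℝ × ℝ × ℝ) : ℝ :=
  x.1 * y.1 + x.2.1 * y.2.1 - x.2.2.1 * y.2.2.1 - x.2.2.2 * y.2.2.2

/-- The compactification map f(p,q,θ₁,θ₂) = (R₁cos θ₁, R₁sin θ₁, R₂cos θ₂, R₂sin θ₂),
with R₁ = (tan p + tan q)/2 and R₂ = (tan p − tan q)/2. -/
noncomputable def compactify (x : ℝ × ℝ × ℝ × ℝ) : ℝ × ℝ × ℝ × ℝ :=
  (((Real.tan x.1 + Real.tan x.2.1) / 2) * Real.cos x.2.2.1,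
   ((Real.tan x.1 + Real.tan x.2.1) / 2) * Real.sin x.2.2.1,
   ((Real.tan x.1 - Real.tan x.2.1) / 2) * Real.cos x.2.2.2,
   ((Real.tan x.1 - Real.tan x.2.1) / 2) * Real.sin x.2.2.2)

open ContinuousLinearMap in
/-- Explicit Fréchet derivative of `compactify`. -/
theorem compactify_hasFDerivAt (p q θ₁ θ₂ : ℝ) (hp : Real.cos p ≠ 0)
    (hq : Real.cos q ≠ 0) :
    HasFDerivAt compactify
      (let P1 : (ℝ × ℝ × ℝ × ℝ) →L[ℝ] ℝ := fst ℝ ℝ (ℝ × ℝ × ℝ)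
       let P2 : (ℝ × ℝ × ℝ × ℝ) →L[ℝ] ℝ := (fst ℝ ℝ (ℝ × ℝ)).comp (snd ℝ ℝ (ℝ × ℝ × ℝ))
       let P3 : (ℝ × ℝ × ℝ × ℝ) →L[ℝ] ℝ :=
         ((fst ℝ ℝ ℝ).comp (snd ℝ ℝ (ℝ × ℝ))).comp (snd ℝ ℝ (ℝ × ℝ × ℝ))
       let P4 : (ℝ × ℝ × ℝ × ℝ) →L[ℝ] ℝ :=
         ((snd ℝ ℝ ℝ).comp (snd ℝ ℝ (ℝ × ℝ))).comp (snd ℝ ℝ (ℝ × ℝ × ℝ))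
       let T1 := (1 / Real.cos p ^ 2) • P1
       let T2 := (1 / Real.cos q ^ 2) • P2
       let R1 := (Real.tan p + Real.tan q) / 2
       let R2 := (Real.tan p - Real.tan q) / 2
       (R1 • (-Real.sin θ₁) • P3 + Real.cos θ₁ • (2 : ℝ)⁻¹ • (T1 + T2)).prod
       ((R1 • Real.cos θ₁ • P3 + Real.sin θ₁ • (2 : ℝ)⁻¹ • (T1 + T2)).prod
       ((R2 • (-Real.sin θ₂) • P4 + Real.cos θ₂ • (2 : ℝ)⁻¹ • (T1 - T2)).prod
        (R2 • Real.cos θ₂ • P4 + Real.sin θ₂ • (2 : ℝ)⁻¹ • (T1 - T2)))))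
      (p, q, θ₁, θ₂) := by
  have h1 : HasFDerivAt (fun x : ℝ × ℝ × ℝ × ℝ => Real.tan x.1)
      ((1 / Real.cos p ^ 2) • fst ℝ ℝ (ℝ × ℝ × ℝ)) (p, q, θ₁, θ₂) :=
    by
      have := (Real.hasDerivAt_tan hp).comp_hasFDerivAt (p, q, θ₁, θ₂) (hasFDerivAt_fst (𝕜 := ℝ) (p := (p, q, θ₁, θ₂)))
      exact this
  have h2 : HasFDerivAt (fun x : ℝ × ℝ × ℝ × ℝ => Real.tan x.2.1)
      ((1 / Real.cos q ^ 2) • ((fst ℝ ℝ (ℝ × ℝ)).comp (snd ℝ ℝ (ℝ × ℝ × ℝ))))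
      (p, q, θ₁, θ₂) :=
    by
      have := (Real.hasDerivAt_tan hq).comp_hasFDerivAt (p, q, θ₁, θ₂) ((hasFDerivAt_fst (𝕜 := ℝ) (p := (q, θ₁, θ₂))).comp (p, q, θ₁, θ₂) (hasFDerivAt_snd (𝕜 := ℝ) (p := (p, q, θ₁, θ₂))))
      exact this
  have hP3 : HasFDerivAt (fun x : ℝ × ℝ × ℝ × ℝ => x.2.2.1)
      (((fst ℝ ℝ ℝ).comp (snd ℝ ℝ (ℝ × ℝ))).comp (snd ℝ ℝ (ℝ × ℝ × ℝ))) (p, q, θ₁, θ₂) :=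
    (hasFDerivAt_fst.comp _ hasFDerivAt_snd).comp _ hasFDerivAt_snd
  have hP4 : HasFDerivAt (fun x : ℝ × ℝ × ℝ × ℝ => x.2.2.2)
      (((snd ℝ ℝ ℝ).comp (snd ℝ ℝ (ℝ × ℝ))).comp (snd ℝ ℝ (ℝ × ℝ × ℝ))) (p, q, θ₁, θ₂) :=
    (hasFDerivAt_snd.comp _ hasFDerivAt_snd).comp _ hasFDerivAt_snd
  have hc1 : HasFDerivAt (fun x : ℝ × ℝ × ℝ × ℝ => Real.cos x.2.2.1)
      ((-Real.sin θ₁) • _) (p, q, θ₁, θ₂) :=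
    ((Real.hasDerivAt_cos θ₁).comp_hasFDerivAt (p, q, θ₁, θ₂) hP3 :)
  have hs1 : HasFDerivAt (fun x : ℝ × ℝ × ℝ × ℝ => Real.sin x.2.2.1)
      ((Real.cos θ₁) • _) (p, q, θ₁, θ₂) :=
    ((Real.hasDerivAt_sin θ₁).comp_hasFDerivAt (p, q, θ₁, θ₂) hP3 :)
  have hc2 : HasFDerivAt (fun x : ℝ × ℝ × ℝ × ℝ => Real.cos x.2.2.2)
      ((-Real.sin θ₂) • _) (p, q, θ₁, θ₂) :=
    ((Real.hasDerivAt_cos θ₂).comp_hasFDerivAt (p, q, θ₁, θ₂) hP4 :)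
  have hs2 : HasFDerivAt (fun x : ℝ × ℝ × ℝ × ℝ => Real.sin x.2.2.2)
      ((Real.cos θ₂) • _) (p, q, θ₁, θ₂) :=
    ((Real.hasDerivAt_sin θ₂).comp_hasFDerivAt (p, q, θ₁, θ₂) hP4 :)
  have hA : HasFDerivAt (fun x : ℝ × ℝ × ℝ × ℝ => (Real.tan x.1 + Real.tan x.2.1) / 2)
      ((2 : ℝ)⁻¹ • (((1 / Real.cos p ^ 2) • fst ℝ ℝ (ℝ × ℝ × ℝ)) +
        ((1 / Real.cos q ^ 2) • ((fst ℝ ℝ (ℝ × ℝ)).comp (snd ℝ ℝ (ℝ × ℝ × ℝ))))))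
      (p, q, θ₁, θ₂) := by
    have e : (fun x : ℝ × ℝ × ℝ × ℝ => (Real.tan x.1 + Real.tan x.2.1) / 2) =
        (2 : ℝ)⁻¹ • ((fun x : ℝ × ℝ × ℝ × ℝ => Real.tan x.1) + fun x => Real.tan x.2.1) := by
      funext x; simp only [Pi.smul_apply, Pi.add_apply, Pi.sub_apply, smul_eq_mul]; ring
    rw [e]; exact (h1.add h2).const_smul (2 : ℝ)⁻¹
  have hB : HasFDerivAt (fun x : ℝ × ℝ × ℝ × ℝ => (Real.tan x.1 - Real.tan x.2.1) / 2)
      ((2 : ℝ)⁻¹ • (((1 / Real.cos p ^ 2) • fst ℝ ℝ (ℝ × ℝ × ℝ)) -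
        ((1 / Real.cos q ^ 2) • ((fst ℝ ℝ (ℝ × ℝ)).comp (snd ℝ ℝ (ℝ × ℝ × ℝ))))))
      (p, q, θ₁, θ₂) := by
    have e : (fun x : ℝ × ℝ × ℝ × ℝ => (Real.tan x.1 - Real.tan x.2.1) / 2) =
        (2 : ℝ)⁻¹ • ((fun x : ℝ × ℝ × ℝ × ℝ => Real.tan x.1) - fun x => Real.tan x.2.1) := by
      funext x; simp only [Pi.smul_apply, Pi.add_apply, Pi.sub_apply, smul_eq_mul]; ring
    rw [e]; exact (h1.sub h2).const_smul (2 : ℝ)⁻¹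
  exact ((hA.mul hc1).prodMk ((hA.mul hs1).prodMk ((hB.mul hc2).prodMk (hB.mul hs2))))

set_option maxHeartbeats 1000000 in
/-- On the domain D = {|p| < π/2, |q| < π/2}, the map `compactify` pulls back the flat
neutral metric to the conformal multiple of dp dq + ¼sin²(p+q)dθ₁² − ¼sin²(p−q)dθ₂²
with conformal factor Ω = cos p cos q. -/
theorem stmt0 (p q θ₁ θ₂ : ℝ) (hp : |p| < Real.pi / 2) (hq : |q| < Real.pi / 2)
    (v w : ℝ × ℝ × ℝ × ℝ) :
    Real.cos p ^ 2 * Real.cos q ^ 2 *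
      neutralB (fderiv ℝ compactify (p, q, θ₁, θ₂) v)
               (fderiv ℝ compactify (p, q, θ₁, θ₂) w) =
      (1 / 2) * (v.1 * w.2.1 + v.2.1 * w.1)
        + (1 / 4) * Real.sin (p + q) ^ 2 * v.2.2.1 * w.2.2.1
        - (1 / 4) * Real.sin (p - q) ^ 2 * v.2.2.2 * w.2.2.2 := by
  have hcp : Real.cos p ≠ 0 := (Real.cos_pos_of_mem_Ioo (abs_lt.mp hp |> fun h => ⟨h.1, h.2⟩)).ne'
  have hcq : Real.cos q ≠ 0 := (Real.cos_pos_of_mem_Ioo (abs_lt.mp hq |> fun h => ⟨h.1, h.2⟩)).ne'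
  rw [(compactify_hasFDerivAt p q θ₁ θ₂ hcp hcq).fderiv]
  simp only [neutralB, ContinuousLinearMap.prod_apply, ContinuousLinearMap.add_apply,
    ContinuousLinearMap.smul_apply, ContinuousLinearMap.sub_apply,
    ContinuousLinearMap.coe_comp', Function.comp_apply, ContinuousLinearMap.coe_fst',
    ContinuousLinearMap.coe_snd', smul_eq_mul]
  have pyth1 : Real.sin θ₁ ^ 2 + Real.cos θ₁ ^ 2 = 1 := Real.sin_sq_add_cos_sq θ₁
  have pyth2 : Real.sin θ₂ ^ 2 + Real.cos θ₂ ^ 2 = 1 := Real.sin_sq_add_cos_sq θ₂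
  rw [Real.tan_eq_sin_div_cos, Real.tan_eq_sin_div_cos, Real.sin_add, Real.sin_sub]
  field_simp
  ring_nf
  simp only [Real.sin_sq]
  ring
end

section
/- Identify ℝ⁴ with ℂ² via (z₁,z₂), and define Ω : ℂ² \ {0} → ℝ by Ω(z₁,z₂) = cos(ρ)·cos((|z₂|² − |z₁|²)/ρ), where ρ = √(|z₁|² + |z₂|²). Then for every point (z₁,z₂) on the 3-sphere ρ = π/2, the Fréchet derivative of Ω at (z₁,z₂) vanishes if and only if z₁ = 0 or z₂ = 0. (Thus the gradient of the conformal factor vanishes on the boundary 3-sphere of radius π/2 precisely on the two core circles {(z₁,0) : |z₁| = π/2} and {(0,z₂) : |z₂| = π/2}, which form a Hopf link.) -/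
/-- The conformal factor Ω of the conformal compactification of ℝ^{2,2}, expressed in the
ball coordinates (z₁,z₂) ∈ ℂ²: Ω(z₁,z₂) = cos(ρ)·cos((|z₂|² − |z₁|²)/ρ) with
ρ = √(|z₁|² + |z₂|²). -/
noncomputable def confFactor (z : ℂ × ℂ) : ℝ :=
  Real.cos (Real.sqrt (‖z.1‖ ^ 2 + ‖z.2‖ ^ 2)) *
    Real.cos ((‖z.2‖ ^ 2 - ‖z.1‖ ^ 2) /
      Real.sqrt (‖z.1‖ ^ 2 + ‖z.2‖ ^ 2))

open Real ContinuousLinearMap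

lemma cosAux (z₁ z₂ : ℂ)
    (hsum : ‖z₁‖ ^ 2 + ‖z₂‖ ^ 2 = (π / 2) ^ 2) :
    Real.cos ((‖z₂‖ ^ 2 - ‖z₁‖ ^ 2) / (π / 2)) = 0 ↔
      z₁ = 0 ∨ z₂ = 0 := by
  have hπ := Real.pi_pos
  have hA : (0:ℝ) ≤ ‖z₁‖ ^ 2 := sq_nonneg _
  have hB : (0:ℝ) ≤ ‖z₂‖ ^ 2 := sq_nonneg _
  set a := ‖z₁‖ ^ 2 with ha
  set b := ‖z₂‖ ^ 2 with hb
  have hz₁ : a = 0 ↔ z₁ = 0 := by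
    rw [ha, pow_eq_zero_iff (two_ne_zero), norm_eq_zero]
  have hz₂ : b = 0 ↔ z₂ = 0 := by
    rw [hb, pow_eq_zero_iff (two_ne_zero), norm_eq_zero]
  constructor
  · intro hc
    set q : ℝ := (b - a) / (π / 2) with hqdef
    have habs : |q| ≤ π / 2 := by
      rw [hqdef, abs_div, abs_of_pos (by positivity : (0:ℝ) < π / 2),
        div_le_iff₀ (by positivity : (0:ℝ) < π / 2), abs_le]
      constructor <;> nlinarith
    have heq : |q| = π / 2 := by
      rcases lt_or_eq_of_le habs with hlt | he
      · exfalso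
        obtain ⟨hl, hr⟩ := abs_lt.mp hlt
        have : 0 < Real.cos q := Real.cos_pos_of_mem_Ioo ⟨hl, hr⟩
        rw [hc] at this; exact lt_irrefl 0 this
      · exact he
    rcases (abs_eq (by positivity : (0:ℝ) ≤ π / 2)).mp heq with h1 | h1
    · left
      rw [hqdef, div_eq_iff (by positivity : (π:ℝ) / 2 ≠ 0)] at h1
      exact hz₁.mp (by nlinarith)
    · right
      rw [hqdef, div_eq_iff (by positivity : (π:ℝ) / 2 ≠ 0)] at h1
      exact hz₂.mp (by nlinarith)
  · rintro (h0 | h0)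
    · have : a = 0 := hz₁.mpr h0
      have hbv : b = (π / 2) ^ 2 := by linarith
      have : (b - a) / (π / 2) = π / 2 := by
        rw [this, hbv]; field_simp; ring
      rw [this, Real.cos_pi_div_two]
    · have : b = 0 := hz₂.mpr h0
      have hav : a = (π / 2) ^ 2 := by linarith
      have : (b - a) / (π / 2) = -(π / 2) := by
        rw [this, hav]; field_simp; ring
      rw [this, Real.cos_neg, Real.cos_pi_div_two]

/-- On the boundary 3-sphere ρ = π/2, the derivative of the conformal factor vanishes
precisely on the Hopf link {z₁ = 0} ∪ {z₂ = 0}. -/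
theorem stmt2 (z₁ z₂ : ℂ)
    (h : Real.sqrt (‖z₁‖ ^ 2 + ‖z₂‖ ^ 2) = Real.pi / 2) :
    fderiv ℝ confFactor (z₁, z₂) = 0 ↔ z₁ = 0 ∨ z₂ = 0 := by
  have hπ := Real.pi_pos
  have hsum : ‖z₁‖ ^ 2 + ‖z₂‖ ^ 2 = (π / 2) ^ 2 := by
    rw [← h, Real.sq_sqrt (by positivity)]
  have hne : ‖z₁‖ ^ 2 + ‖z₂‖ ^ 2 ≠ 0 := by
    rw [hsum]; positivity
  set T : (ℂ × ℂ) →L[ℝ] ℝ :=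
    (2 • (innerSL ℝ z₁)).comp (fst ℝ ℂ ℂ) + (2 • (innerSL ℝ z₂)).comp (snd ℝ ℂ ℂ) with hT
  set T' : (ℂ × ℂ) →L[ℝ] ℝ :=
    (2 • (innerSL ℝ z₂)).comp (snd ℝ ℂ ℂ) - (2 • (innerSL ℝ z₁)).comp (fst ℝ ℂ ℂ) with hT'
  -- derivative of the sum of squares
  have hs : HasFDerivAt (fun z : ℂ × ℂ => ‖z.1‖ ^ 2 + ‖z.2‖ ^ 2)
      T (z₁, z₂) := by
    have h1 : HasFDerivAt (fun z : ℂ × ℂ => ‖z.1‖ ^ 2 + ‖z.2‖ ^ 2) T (z₁, z₂) :=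
      ((hasFDerivAt_fst (p := (z₁, z₂))).norm_sq).add ((hasFDerivAt_snd (p := (z₁, z₂))).norm_sq)
    exact h1
  -- derivative of the difference of squares
  have hd : HasFDerivAt (fun z : ℂ × ℂ => ‖z.2‖ ^ 2 - ‖z.1‖ ^ 2)
      T' (z₁, z₂) := by
    have h1 : HasFDerivAt (fun z : ℂ × ℂ => ‖z.2‖ ^ 2 - ‖z.1‖ ^ 2) T' (z₁, z₂) :=
      ((hasFDerivAt_snd (p := (z₁, z₂))).norm_sq).sub ((hasFDerivAt_fst (p := (z₁, z₂))).norm_sq)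
    exact h1
  -- derivative of the radius
  have hr : HasFDerivAt
      (fun z : ℂ × ℂ => Real.sqrt (‖z.1‖ ^ 2 + ‖z.2‖ ^ 2))
      ((1 / (2 * (π / 2))) • T) (z₁, z₂) := by
    have := (Real.hasDerivAt_sqrt hne).comp_hasFDerivAt (z₁, z₂) hs
    rw [h] at this
    exact this
  -- derivative of cos ∘ radius
  have hcos1 : HasFDerivAt
      (fun z : ℂ × ℂ => Real.cos (Real.sqrt (‖z.1‖ ^ 2 + ‖z.2‖ ^ 2)))
      ((-(1 / π)) • T) (z₁, z₂) := by
    have hr' := hr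
    rw [← h] at hr'
    have := (Real.hasDerivAt_cos
      (Real.sqrt (‖z₁‖ ^ 2 + ‖z₂‖ ^ 2))).comp_hasFDerivAt (z₁, z₂) hr'
    rw [h] at this
    simp only [Function.comp_def] at this
    refine this.congr_fderiv ?_
    rw [Real.sin_pi_div_two]
    module
  -- derivative of inverse radius
  have hinv : HasFDerivAt
      (fun z : ℂ × ℂ => (Real.sqrt (‖z.1‖ ^ 2 + ‖z.2‖ ^ 2))⁻¹)
      ((-((π / 2) ^ 2)⁻¹) • ((1 / (2 * (π / 2))) • T)) (z₁, z₂) := by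
    have hne' : Real.sqrt (‖z₁‖ ^ 2 + ‖z₂‖ ^ 2) ≠ 0 := by
      rw [h]; positivity
    have := (hasDerivAt_inv hne').comp_hasFDerivAt (z₁, z₂) hr
    rw [h] at this
    simpa only [Function.comp_def] using this
  -- derivative of the quotient
  have hq := hd.mul hinv
  have hcos2 := (Real.hasDerivAt_cos ((‖z₂‖ ^ 2 - ‖z₁‖ ^ 2) *
      (Real.sqrt (‖z₁‖ ^ 2 + ‖z₂‖ ^ 2))⁻¹)).comp_hasFDerivAt (z₁, z₂) hq
  have hprod := hcos1.mul hcos2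
  simp only [Function.comp_def] at hprod
  rw [h] at hprod
  simp only [Real.cos_pi_div_two, zero_smul, zero_add] at hprod
  have hfull : HasFDerivAt confFactor
      ((-(Real.cos ((‖z₂‖ ^ 2 - ‖z₁‖ ^ 2) / (π / 2)) / π)) • T) (z₁, z₂) := by
    have hfun : confFactor = fun z : ℂ × ℂ =>
        Real.cos (Real.sqrt (‖z.1‖ ^ 2 + ‖z.2‖ ^ 2)) *
          Real.cos ((‖z.2‖ ^ 2 - ‖z.1‖ ^ 2) *
            (Real.sqrt (‖z.1‖ ^ 2 + ‖z.2‖ ^ 2))⁻¹) := by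
      funext z; simp [confFactor, div_eq_mul_inv]
    rw [hfun]
    refine hprod.congr_fderiv ?_
    rw [div_eq_mul_inv (‖z₂‖ ^ 2 - ‖z₁‖ ^ 2), smul_smul]
    congr 1
    simp only [Pi.mul_apply, h]
    ring
  rw [hfull.fderiv]
  have hA : (0:ℝ) ≤ ‖z₁‖ ^ 2 := sq_nonneg _
  have hB : (0:ℝ) ≤ ‖z₂‖ ^ 2 := sq_nonneg _
  have hTval : T (z₁, z₂) = 2 * (π / 2) ^ 2 := by
    simp only [hT, ContinuousLinearMap.add_apply, ContinuousLinearMap.comp_apply,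
      ContinuousLinearMap.smul_apply, ContinuousLinearMap.coe_fst', ContinuousLinearMap.coe_snd',
      innerSL_apply_apply, real_inner_self_eq_norm_sq, smul_eq_mul]
    rw [← hsum]; ring
  have hcos_iff := cosAux z₁ z₂ hsum
  clear hprod hcos2 hq hfull hcos1 hinv hr hs hd
  constructor
  · intro h0
    have := ContinuousLinearMap.ext_iff.mp h0 (z₁, z₂)
    simp only [ContinuousLinearMap.smul_apply, ContinuousLinearMap.zero_apply,
      smul_eq_mul, hTval] at this
    have hc : Real.cos ((‖z₂‖ ^ 2 - ‖z₁‖ ^ 2) / (π / 2)) = 0 := by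
      have h2 : (2:ℝ) * (π / 2) ^ 2 ≠ 0 := by positivity
      have := mul_eq_zero.mp this
      rcases this with h3 | h3
      · field_simp at h3
        rw [div_div_eq_mul_div]
        linarith
      · exact absurd h3 h2
    exact hcos_iff.mp hc
  · intro h0
    have hc := hcos_iff.mpr h0
    rw [hc]
    simp
end

section
/- Let ψ ∈ ℝ, σ ∈ ℂ and A, B ∈ ℝ, and assume ψ + σe^{2iA} ≠ 0. Then Im[(σ + ψe^{−2iA})e^{2iB} + σe^{2iA}] = 0 if and only if either e^{2iB} = −e^{2iA}, or (ψ + σe^{2iA})·e^{2iB} = e^{2iA}·(ψ + σ̄e^{−2iA}). -/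
/-- The algebraic core of the Lemma characterizing null tangent vectors of the tangent
hypersurface H(S): assuming ψ + σe^{2iA} ≠ 0,
Im[(σ + ψe^{−2iA})e^{2iB} + σe^{2iA}] = 0 iff either e^{2iB} = −e^{2iA} (β-plane), or
(ψ + σe^{2iA})e^{2iB} = e^{2iA}(ψ + σ̄e^{−2iA}) (α-plane). -/
theorem stmt4 (ψ : ℝ) (σ : ℂ) (A B : ℝ)
    (h : (ψ : ℂ) + σ * Complex.exp (2 * (A : ℂ) * Complex.I) ≠ 0) :
    ((σ + (ψ : ℂ) * Complex.exp (-(2 * (A : ℂ)) * Complex.I)) *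
        Complex.exp (2 * (B : ℂ) * Complex.I) +
      σ * Complex.exp (2 * (A : ℂ) * Complex.I)).im = 0 ↔
    (Complex.exp (2 * (B : ℂ) * Complex.I) = -Complex.exp (2 * (A : ℂ) * Complex.I) ∨
      ((ψ : ℂ) + σ * Complex.exp (2 * (A : ℂ) * Complex.I)) *
          Complex.exp (2 * (B : ℂ) * Complex.I) =
        Complex.exp (2 * (A : ℂ) * Complex.I) *
          ((ψ : ℂ) + (starRingEnd ℂ) σ * Complex.exp (-(2 * (A : ℂ)) * Complex.I))) := by
  set u := Complex.exp (2 * (A : ℂ) * Complex.I) with hu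
  set w := Complex.exp (2 * (B : ℂ) * Complex.I) with hw
  have hune : u ≠ 0 := Complex.exp_ne_zero _
  have hwne : w ≠ 0 := Complex.exp_ne_zero _
  have hAinv : Complex.exp (-(2 * (A : ℂ)) * Complex.I) = u⁻¹ := by
    rw [hu, ← Complex.exp_neg]; ring_nf
  have hcu : (starRingEnd ℂ) u = u⁻¹ := by
    rw [hu, ← Complex.exp_conj, ← Complex.exp_neg]
    congr 1
    rw [map_mul, map_mul, Complex.conj_I, map_ofNat, Complex.conj_ofReal]
    ring
  have hcw : (starRingEnd ℂ) w = w⁻¹ := by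
    rw [hw, ← Complex.exp_conj, ← Complex.exp_neg]
    congr 1
    rw [map_mul, map_mul, Complex.conj_I, map_ofNat, Complex.conj_ofReal]
    ring
  rw [hAinv, ← Complex.conj_eq_iff_im]
  simp only [map_add, map_mul, Complex.conj_ofReal, map_inv₀, hcu, hcw, inv_inv]
  have factored : (w + u) * (((ψ : ℂ) + σ * u) * w - ((ψ : ℂ) * u + (starRingEnd ℂ) σ)) =
      -(((((starRingEnd ℂ) σ + (ψ : ℂ) * u) * w⁻¹ + (starRingEnd ℂ) σ * u⁻¹) -
        ((σ + (ψ : ℂ) * u⁻¹) * w + σ * u)) * (u * w)) := by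
    field_simp
    ring
  have key : ((starRingEnd ℂ) σ + (ψ : ℂ) * u) * w⁻¹ + (starRingEnd ℂ) σ * u⁻¹ =
      (σ + (ψ : ℂ) * u⁻¹) * w + σ * u ↔
      (w + u) * (((ψ : ℂ) + σ * u) * w - ((ψ : ℂ) * u + (starRingEnd ℂ) σ)) = 0 := by
    rw [factored, neg_eq_zero, mul_eq_zero, sub_eq_zero]
    constructor
    · intro h1; exact Or.inl h1
    · rintro (h1 | h1)
      · exact h1
      · exact absurd h1 (mul_ne_zero hune hwne)
  have hrhs : u * ((ψ : ℂ) + (starRingEnd ℂ) σ * u⁻¹) = (ψ : ℂ) * u + (starRingEnd ℂ) σ := by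
    field_simp
  rw [key, mul_eq_zero, add_eq_zero_iff_eq_neg, sub_eq_zero, hrhs]
end

section
/- Let E = ℝ³ with the Euclidean inner product, let c ∈ E, let r₁ ≥ r₂ > 0, and let u ∈ E with ‖u‖ = 1. Then there exists q ∈ E such that the line {q + tu : t ∈ ℝ} is tangent to both the sphere of radius r₁ centred at 0 and the sphere of radius r₂ centred at c — i.e. ‖q − ⟨q,u⟩u‖ = r₁ and ‖(q−c) − ⟨q−c,u⟩u‖ = r₂ — if and only if r₁ − r₂ ≤ ‖c − ⟨c,u⟩u‖ ≤ r₁ + r₂. -/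
open scoped RealInnerProductSpace
open Submodule Module

lemma exists_unit_orth (u d : EuclideanSpace ℝ (Fin 3)) :
    ∃ w : EuclideanSpace ℝ (Fin 3), ‖w‖ = 1 ∧ ⟪u, w⟫ = 0 ∧ ⟪d, w⟫ = 0 := by
  set K := Submodule.span ℝ ({u, d} : Set (EuclideanSpace ℝ (Fin 3))) with hK
  have hsing : ∀ x : EuclideanSpace ℝ (Fin 3), finrank ℝ (ℝ ∙ x) ≤ 1 := by
    intro x
    rcases eq_or_ne x 0 with h | h
    · subst h
      rw [Submodule.span_zero_singleton]
      simp
    · rw [finrank_span_singleton h]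
  have hle : finrank ℝ K ≤ 2 := by
    have hKeq : K = (ℝ ∙ u) ⊔ (ℝ ∙ d) := by
      rw [hK, Submodule.span_insert]
    rw [hKeq]
    have := Submodule.finrank_add_le_finrank_add_finrank (ℝ ∙ u) (ℝ ∙ d)
    have h1 := hsing u
    have h2 := hsing d
    omega
  have hdim : finrank ℝ K + finrank ℝ Kᗮ = 3 := by
    simpa using K.finrank_add_finrank_orthogonal
  have hpos : 0 < finrank ℝ (Kᗮ : Submodule ℝ (EuclideanSpace ℝ (Fin 3))) := by omega
  obtain ⟨⟨w, hwK⟩, hw0⟩ := Module.finrank_pos_iff_exists_ne_zero.1 hpos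
  have hw0' : w ≠ 0 := by simpa [Submodule.mk_eq_zero] using hw0
  refine ⟨‖w‖⁻¹ • w, ?_, ?_, ?_⟩
  · simp [norm_smul, norm_ne_zero_iff.2 hw0', abs_of_nonneg, inv_mul_cancel₀]
  · have := hwK u (subset_span (by simp))
    rw [real_inner_smul_right, this, mul_zero]
  · have := hwK d (subset_span (by simp))
    rw [real_inner_smul_right, this, mul_zero]

lemma norm_combo {E : Type*} [NormedAddCommGroup E] [InnerProductSpace ℝ E]
    (d w : E) (s t : ℝ) (hdw : ⟪d, w⟫ = 0) :
    ‖s • d + t • w‖ ^ 2 = s ^ 2 * ‖d‖ ^ 2 + t ^ 2 * ‖w‖ ^ 2 := by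
  rw [norm_add_sq_real, real_inner_smul_left, real_inner_smul_right, hdw,
    norm_smul, norm_smul, mul_pow, mul_pow]
  simp [sq_abs]

/-- A line {q + tu} with unit direction u is tangent to both the sphere of radius r₁
centred at 0 and the sphere of radius r₂ centred at c for some base point q iff
r₁ − r₂ ≤ ‖c − ⟨c,u⟩u‖ ≤ r₁ + r₂. -/
theorem stmt12 (r₁ r₂ : ℝ) (h12 : r₁ ≥ r₂) (h2 : 0 < r₂)
    (c u : EuclideanSpace ℝ (Fin 3)) (hu : ‖u‖ = 1) :
    (∃ q : EuclideanSpace ℝ (Fin 3),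
        ‖q - ⟪q, u⟫ • u‖ = r₁ ∧ ‖(q - c) - ⟪q - c, u⟫ • u‖ = r₂) ↔
      (r₁ - r₂ ≤ ‖c - ⟪c, u⟫ • u‖ ∧ ‖c - ⟪c, u⟫ • u‖ ≤ r₁ + r₂) := by
  set d : EuclideanSpace ℝ (Fin 3) := c - ⟪c, u⟫ • u with hd
  have huu : ⟪u, u⟫ = (1 : ℝ) := by
    rw [real_inner_self_eq_norm_sq, hu]; ring
  have hdu : ⟪d, u⟫ = 0 := by
    rw [hd, inner_sub_left, real_inner_smul_left, huu]; ring
  clear_value d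
  constructor
  · rintro ⟨q, hq1, hq2⟩
    have key : (q - c) - ⟪q - c, u⟫ • u = (q - ⟪q, u⟫ • u) - d := by
      rw [hd, inner_sub_left, sub_smul]; abel
    rw [key] at hq2
    set p := q - ⟪q, u⟫ • u
    have t1 : ‖p‖ ≤ ‖p - d‖ + ‖d‖ := by
      have := norm_add_le (p - d) d
      simpa using this
    have t2 : ‖d‖ ≤ ‖p‖ + ‖p - d‖ := by
      have := norm_sub_le p (p - d)
      simpa using this
    constructor
    · rw [hq1, hq2] at t1; linarith
    · rw [hq1, hq2] at t2; linarith
  · rintro ⟨hlo, hhi⟩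
    obtain ⟨w, hw1, hwu, hwd⟩ := exists_unit_orth u d
    have hww : ⟪w, w⟫ = (1 : ℝ) := by rw [real_inner_self_eq_norm_sq, hw1]; ring
    set L := ‖d‖ with hL
    rcases eq_or_lt_of_le (norm_nonneg d) with h0 | hLpos
    · -- L = 0, so d = 0 and r₁ = r₂
      have hd0 : d = 0 := norm_eq_zero.1 h0.symm
      have hr : r₁ = r₂ := by
        have hL0 : L = 0 := by rw [hL, ← h0]
        have : r₁ - r₂ ≤ 0 := by rw [← hL0]; exact hlo
        linarith
      have hpu : ⟪(r₁ : ℝ) • w, u⟫ = 0 := by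
        rw [real_inner_smul_left, real_inner_comm, hwu]; ring
      have h1pos : (0:ℝ) < r₁ := lt_of_lt_of_le h2 h12
      refine ⟨r₁ • w, ?_, ?_⟩
      · rw [hpu]
        simp [norm_smul, abs_of_pos h1pos, hw1]
      · have key : ((r₁ : ℝ) • w - c) - ⟪(r₁ : ℝ) • w - c, u⟫ • u
            = (r₁ : ℝ) • w - ⟪(r₁ : ℝ) • w, u⟫ • u - d := by
          rw [hd, inner_sub_left, sub_smul]; abel
        rw [key, hpu, hd0]
        simp only [zero_smul, sub_zero]
        rw [norm_smul, hw1, mul_one, Real.norm_eq_abs, abs_of_pos h1pos]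
        exact hr
    · -- L > 0
      set α := (L^2 + r₁^2 - r₂^2) / (2*L) with hα
      clear_value α
      have hLpos' : (0:ℝ) < L := by rw [hL]; exact hLpos
      have hβnn : r₁^2 - α^2 ≥ 0 := by
        rw [hα, ge_iff_le, sub_nonneg, div_pow, div_le_iff₀ (by positivity)]
        have ha : 0 ≤ (r₂ - (L - r₁)) * (r₂ + (L - r₁)) :=
          mul_nonneg (by linarith) (by linarith)
        have hb : 0 ≤ ((L + r₁) - r₂) * ((L + r₁) + r₂) :=
          mul_nonneg (by linarith) (by linarith)
        nlinarith [mul_nonneg ha hb]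
      set β := Real.sqrt (r₁^2 - α^2) with hβ
      have hβ2 : β^2 = r₁^2 - α^2 := Real.sq_sqrt hβnn
      set p : EuclideanSpace ℝ (Fin 3) := (α / L) • d + β • w with hp
      clear_value p
      have hpu : ⟪p, u⟫ = 0 := by
        rw [hp, inner_add_left, real_inner_smul_left, real_inner_smul_left,
          hdu, real_inner_comm u w, hwu]; ring
      have hαL : 2 * α * L = L^2 + r₁^2 - r₂^2 := by
        rw [hα]; field_simp
      have hnp : ‖p‖^2 = r₁^2 := by
        rw [hp, norm_combo d w _ _ hwd, hw1, ← hL]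
        have hL0 : L ≠ 0 := ne_of_gt hLpos'
        field_simp
        linear_combination hβ2
      have hsplit : p - d = ((α - L) / L) • d + β • w := by
        rw [hp, sub_div, div_self (ne_of_gt hLpos'), sub_smul, one_smul]; abel
      have hnpd : ‖p - d‖^2 = r₂^2 := by
        rw [hsplit, norm_combo d w _ _ hwd, hw1, ← hL]
        have hL0 : L ≠ 0 := ne_of_gt hLpos'
        field_simp
        linear_combination hβ2 - hαL
      refine ⟨p, ?_, ?_⟩
      · rw [hpu]
        simp only [zero_smul, sub_zero]
        have h1pos : (0:ℝ) < r₁ := lt_of_lt_of_le h2 h12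
        rw [← Real.sqrt_sq (norm_nonneg p), hnp, Real.sqrt_sq h1pos.le]
      · have key : (p - c) - ⟪p - c, u⟫ • u = p - ⟪p, u⟫ • u - d := by
          rw [hd, inner_sub_left, sub_smul]; abel
        rw [key, hpu]
        simp only [zero_smul, sub_zero]
        rw [← Real.sqrt_sq (norm_nonneg (p - d)), hnpd, Real.sqrt_sq h2.le]
end

section
/- Let E = ℝ³ with the Euclidean inner product, let c ∈ E and let r₁ ≥ r₂ > 0. Then there exist u, q ∈ E with ‖u‖ = 1 such that the line {q + tu : t ∈ ℝ} is tangent to both the sphere of radius r₁ centred at 0 and the sphere of radius r₂ centred at c — i.e. ‖q − ⟨q,u⟩u‖ = r₁ and ‖(q−c) − ⟨q−c,u⟩u‖ = r₂ — if and only if ‖c‖ ≥ r₁ − r₂. Equivalently, the set of common tangent lines (and hence the intersection H(S₁) ∩ H(S₂) of the tangent hypersurfaces) is empty if and only if ‖c‖ < r₁ − r₂. -/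
open scoped RealInnerProductSpace

local notation "E" => EuclideanSpace ℝ (Fin 3)

lemma exists_unit_orthogonal (c : E) : ∃ w : E, ‖w‖ = 1 ∧ ⟪c, w⟫ = 0 := by
  have hne : (ℝ ∙ c)ᗮ ≠ ⊥ := by
    intro h
    have htop : (ℝ ∙ c) = ⊤ := Submodule.orthogonal_eq_bot_iff.mp h
    have h1 : Module.finrank ℝ (ℝ ∙ c) ≤ 1 := by
      rcases eq_or_ne c 0 with hc | hc
      · rw [hc, Submodule.span_zero_singleton]; simp
      · exact le_of_eq (finrank_span_singleton hc)
    rw [htop, finrank_top] at h1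
    simp [finrank_euclideanSpace] at h1
  obtain ⟨v, hv, hv0⟩ := Submodule.exists_mem_ne_zero_of_ne_bot hne
  refine ⟨‖v‖⁻¹ • v, ?_, ?_⟩
  · rw [norm_smul, norm_inv, norm_norm]
    exact inv_mul_cancel₀ (norm_ne_zero_iff.mpr hv0)
  · have h := (Submodule.mem_orthogonal _ _).mp hv c (Submodule.mem_span_singleton_self c)
    rw [real_inner_smul_right, h, mul_zero]

lemma exists_unit_inner_eq (c : E) (s : ℝ) (h0 : 0 ≤ s) (hs : s ≤ ‖c‖) :
    ∃ n : E, ‖n‖ = 1 ∧ ⟪c, n⟫ = s := by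
  rcases eq_or_ne c 0 with hc | hc
  · obtain ⟨w, hw1, hw2⟩ := exists_unit_orthogonal c
    have : s = 0 := le_antisymm (by simpa [hc] using hs) h0
    exact ⟨w, hw1, by rw [hw2, this]⟩
  · obtain ⟨w, hw1, hw2⟩ := exists_unit_orthogonal c
    have hcn : (0:ℝ) < ‖c‖ := norm_pos_iff.mpr hc
    set t : ℝ := s / ‖c‖ with ht
    have ht1 : t ≤ 1 := by rw [ht, div_le_one hcn]; exact hs
    have ht0 : 0 ≤ t := div_nonneg h0 hcn.le
    have hnn : 0 ≤ 1 - t ^ 2 := by nlinarith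
    refine ⟨(t / ‖c‖) • c + Real.sqrt (1 - t ^ 2) • w, ?_, ?_⟩
    · have horth : ⟪(t / ‖c‖) • c, Real.sqrt (1 - t ^ 2) • w⟫ = 0 := by
        rw [real_inner_smul_left, real_inner_smul_right, hw2]; ring
      have := norm_add_sq_real ((t / ‖c‖) • c) (Real.sqrt (1 - t ^ 2) • w)
      rw [horth] at this
      have h1 : ‖(t / ‖c‖) • c‖ ^ 2 = t ^ 2 := by
        rw [norm_smul, Real.norm_eq_abs, abs_of_nonneg (div_nonneg ht0 hcn.le)]
        field_simp
      have h2 : ‖Real.sqrt (1 - t ^ 2) • w‖ ^ 2 = 1 - t ^ 2 := by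
        rw [norm_smul, Real.norm_eq_abs, abs_of_nonneg (Real.sqrt_nonneg _), hw1,
          mul_one, Real.sq_sqrt hnn]
      have : ‖(t / ‖c‖) • c + Real.sqrt (1 - t ^ 2) • w‖ ^ 2 = 1 := by
        rw [this, h1, h2]; ring
      nlinarith [norm_nonneg ((t / ‖c‖) • c + Real.sqrt (1 - t ^ 2) • w)]
    · rw [inner_add_right, real_inner_smul_right, real_inner_smul_right, hw2,
        real_inner_self_eq_norm_sq]
      field_simp [ht]
      rw [mul_zero, add_zero, ht, div_mul_cancel₀ _ hcn.ne']

/-- There exists a common tangent line to the sphere of radius r₁ centred at 0 and the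
sphere of radius r₂ ≤ r₁ centred at c iff ‖c‖ ≥ r₁ − r₂; i.e. the intersection
H(S₁) ∩ H(S₂) of the tangent hypersurfaces is empty iff ‖c‖ < r₁ − r₂. -/
theorem stmt13 (r₁ r₂ : ℝ) (h12 : r₁ ≥ r₂) (h2 : 0 < r₂) (c : EuclideanSpace ℝ (Fin 3)) :
    (∃ u q : EuclideanSpace ℝ (Fin 3), ‖u‖ = 1 ∧
        ‖q - ⟪q, u⟫ • u‖ = r₁ ∧ ‖(q - c) - ⟪q - c, u⟫ • u‖ = r₂) ↔
      ‖c‖ ≥ r₁ - r₂ := by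
  constructor
  · rintro ⟨u, q, hu, hq1, hq2⟩
    set p₁ : E := q - ⟪q, u⟫ • u with hp₁
    set p₂ : E := (q - c) - ⟪q - c, u⟫ • u with hp₂
    have hdiff : p₁ - p₂ = c - ⟪c, u⟫ • u := by
      rw [hp₁, hp₂, inner_sub_left]
      module
    have key1 : r₁ - r₂ ≤ ‖c - ⟪c, u⟫ • u‖ := by
      rw [← hdiff, ← hq1, ← hq2]
      exact norm_sub_norm_le p₁ p₂
    have key2 : ‖c - ⟪c, u⟫ • u‖ ≤ ‖c‖ := by
      have hsq := norm_sub_sq_real c (⟪c, u⟫ • u)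
      rw [real_inner_smul_right, norm_smul, hu, mul_one, Real.norm_eq_abs] at hsq
      rw [sq_abs] at hsq
      nlinarith [norm_nonneg (c - ⟪c, u⟫ • u), norm_nonneg c, sq_nonneg (⟪c, u⟫ : ℝ)]
    linarith
  · intro h
    set s : ℝ := r₁ - r₂ with hsdef
    have hs0 : 0 ≤ s := by linarith
    obtain ⟨n, hn1, hn2⟩ := exists_unit_inner_eq c s hs0 h
    set m : E := c - s • n with hm
    have hnm : ⟪n, m⟫ = 0 := by
      rw [hm, inner_sub_right, real_inner_smul_right, real_inner_self_eq_norm_sq, hn1,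
        real_inner_comm, hn2]
      ring
    have hcm : ⟪c, m⟫ = ‖m‖ ^ 2 := by
      have : ⟪m, m⟫ = ⟪c, m⟫ - s * ⟪n, m⟫ := by
        rw [hm, inner_sub_left, real_inner_smul_left]
      rw [hnm, mul_zero, sub_zero] at this
      rw [← this, real_inner_self_eq_norm_sq]
    obtain ⟨u, hu1, hu2, hu3⟩ : ∃ u : E, ‖u‖ = 1 ∧ ⟪n, u⟫ = 0 ∧ ⟪c, u⟫ • u = m := by
      rcases eq_or_ne m 0 with hm0 | hm0
      · obtain ⟨u, hw1, hw2⟩ := exists_unit_orthogonal n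
        refine ⟨u, hw1, hw2, ?_⟩
        have hcu : ⟪c, u⟫ = 0 := by
          have hc : c = s • n + m := by rw [hm]; module
          rw [hc, hm0, add_zero, real_inner_smul_left, hw2, mul_zero]
        rw [hcu, zero_smul, hm0]
      · have hmnorm : (0:ℝ) < ‖m‖ := norm_pos_iff.mpr hm0
        refine ⟨‖m‖⁻¹ • m, ?_, ?_, ?_⟩
        · rw [norm_smul, norm_inv, norm_norm]
          exact inv_mul_cancel₀ hmnorm.ne'
        · rw [real_inner_smul_right, hnm, mul_zero]
        · rw [real_inner_smul_right, hcm, smul_smul]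
          rw [show ‖m‖⁻¹ * ‖m‖ ^ 2 * ‖m‖⁻¹ = (‖m‖⁻¹ * ‖m‖) * (‖m‖⁻¹ * ‖m‖) by ring,
            inv_mul_cancel₀ hmnorm.ne', one_mul, one_smul]
    refine ⟨u, r₁ • n, hu1, ?_, ?_⟩
    · have hqu : ⟪r₁ • n, u⟫ = 0 := by rw [real_inner_smul_left, hu2, mul_zero]
      rw [hqu, zero_smul, sub_zero, norm_smul, hn1, mul_one, Real.norm_eq_abs,
        abs_of_pos (lt_of_lt_of_le h2 h12)]
    · have hqcu : ⟪r₁ • n - c, u⟫ = -⟪c, u⟫ := by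
        rw [inner_sub_left, real_inner_smul_left, hu2, mul_zero, zero_sub]
      rw [hqcu]
      have : r₁ • n - c - (-⟪c, u⟫) • u = r₂ • n := by
        have h1 : (-⟪c, u⟫) • u = -m := by rw [neg_smul, hu3]
        rw [h1, sub_neg_eq_add, hm, hsdef]
        module
      rw [this, norm_smul, hn1, mul_one, Real.norm_eq_abs, abs_of_pos h2]
end

section
/- Let E = ℝ³ with the Euclidean inner product, let r₁ ≥ r₂ > 0 and let c ∈ E with ‖c‖ > r₁ + r₂ (so the spheres are disjoint and lie outside one another). Then the set M = {(u,q) ∈ E × E : ‖u‖ = 1, ⟨q,u⟩ = 0, ‖q‖ = r₁, ‖(q−c) − ⟨q−c,u⟩u‖ = r₂}, with the subspace topology of E × E, is homeomorphic to the disjoint union of two copies of the 2-torus S¹ × S¹ (where S¹ denotes the unit circle in ℝ²). -/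
open scoped RealInnerProductSpace

namespace Stmt16

noncomputable section

abbrev E3 := EuclideanSpace ℝ (Fin 3)
abbrev Tor := Metric.sphere (0 : EuclideanSpace ℝ (Fin 2)) 1 ×
  Metric.sphere (0 : EuclideanSpace ℝ (Fin 2)) 1

/-- The set of oriented common tangent lines. -/
def M (r₁ r₂ : ℝ) (c : E3) : Set (E3 × E3) :=
  {p | ‖p.1‖ = 1 ∧ ⟪p.2, p.1⟫ = 0 ∧ ‖p.2‖ = r₁ ∧
      ‖(p.2 - c) - ⟪p.2 - c, p.1⟫ • p.1‖ = r₂}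

lemma sum_sq_of_sphere {x : EuclideanSpace ℝ (Fin 2)}
    (h : x ∈ Metric.sphere (0 : EuclideanSpace ℝ (Fin 2)) 1) :
    x 0 ^ 2 + x 1 ^ 2 = 1 := by
  have h1 : ‖x‖ = 1 := by simpa using h
  have h2 := EuclideanSpace.norm_eq x
  rw [h1] at h2
  have h3 : (0:ℝ) ≤ ∑ i, ‖x i‖ ^ 2 := by positivity
  have h4 : ∑ i, ‖x i‖ ^ 2 = 1 := by nlinarith [Real.sq_sqrt h3]
  simpa [Fin.sum_univ_two, Real.norm_eq_abs, sq_abs] using h4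

lemma norm_eq_iff_sum_sq {n : ℕ} (x : EuclideanSpace ℝ (Fin n)) {r : ℝ} (hr : 0 ≤ r) :
    ‖x‖ = r ↔ ∑ i, x i ^ 2 = r ^ 2 := by
  rw [EuclideanSpace.norm_eq]
  constructor
  · intro h
    have h3 : (0:ℝ) ≤ ∑ i, ‖x i‖ ^ 2 := by positivity
    have := Real.sq_sqrt h3
    rw [h] at this
    simpa [Real.norm_eq_abs, sq_abs] using this.symm
  · intro h
    have : ∑ i, ‖x i‖ ^ 2 = r ^ 2 := by simpa [Real.norm_eq_abs, sq_abs] using h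
    rw [this]
    exact Real.sqrt_sq hr

lemma mem_sphere_of_sum_sq {x : EuclideanSpace ℝ (Fin 2)} (h : x 0 ^ 2 + x 1 ^ 2 = 1) :
    x ∈ Metric.sphere (0 : EuclideanSpace ℝ (Fin 2)) 1 := by
  have : ‖x‖ = 1 := by
    rw [norm_eq_iff_sum_sq x zero_le_one, Fin.sum_univ_two]
    simpa using h
  simpa using this

lemma norm_sq_sum (x : E3) : ‖x‖ ^ 2 = ∑ i, x i ^ 2 := by
  rw [EuclideanSpace.norm_eq, Real.sq_sqrt (by positivity)]
  simp [Real.norm_eq_abs, sq_abs]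

lemma inner_eq_sum (x y : E3) : ⟪x, y⟫ = x 0 * y 0 + x 1 * y 1 + x 2 * y 2 := by
  simp [PiLp.inner_apply, RCLike.inner_apply, conj_trivial, Fin.sum_univ_three]; ring

lemma norm_proj_sq {u v : E3} (hu : ‖u‖ = 1) :
    ‖v - ⟪v, u⟫ • u‖ ^ 2 = ‖v‖ ^ 2 - ⟪v, u⟫ ^ 2 := by
  have h1 : ‖v - ⟪v, u⟫ • u‖ ^ 2 = ‖v‖ ^ 2 - 2 * ⟪v, ⟪v, u⟫ • u⟫ + ‖⟪v, u⟫ • u‖ ^ 2 :=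
    norm_sub_sq_real v (⟪v, u⟫ • u)
  rw [real_inner_smul_right, norm_smul] at h1
  rw [hu] at h1
  simp only [mul_one] at h1
  rw [h1]
  have h2 : ‖⟪v, u⟫‖ = |⟪v, u⟫| := rfl
  rw [h2]
  ring_nf
  rw [sq_abs]
  ring

lemma tangent_iff {u v : E3} (hu : ‖u‖ = 1) {r : ℝ} (hr : 0 ≤ r) :
    ‖v - ⟪v, u⟫ • u‖ = r ↔ ‖v‖ ^ 2 - ⟪v, u⟫ ^ 2 = r ^ 2 := by
  rw [← norm_proj_sq hu]
  constructor
  · intro h; rw [h]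
  · intro h
    have hn : 0 ≤ ‖v - ⟪v, u⟫ • u‖ := norm_nonneg _
    nlinarith [h]

/-! ### The parameterization -/

def sv (r₁ r₂ W0 : ℝ) : ℝ := r₁ + r₂ * W0
def Dv (r₁ r₂ l W0 : ℝ) : ℝ := Real.sqrt (l ^ 2 - sv r₁ r₂ W0 ^ 2)
def Rv (r₁ r₂ l W0 : ℝ) : ℝ := Real.sqrt (l ^ 2 - 2 * r₁ * sv r₁ r₂ W0 + r₁ ^ 2 - r₂ ^ 2)

def qF (r₁ r₂ l W0 V0 V1 : ℝ) : E3 :=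
  WithLp.toLp 2 ![r₁ * Dv r₁ r₂ l W0 * V0 / l, r₁ * Dv r₁ r₂ l W0 * V1 / l, r₁ * sv r₁ r₂ W0 / l]

def uF (r₁ r₂ l W0 W1 V0 V1 : ℝ) : E3 :=
  WithLp.toLp 2 ![(-(Rv r₁ r₂ l W0 * sv r₁ r₂ W0 * V0) / l + r₂ * W1 * V1) / Dv r₁ r₂ l W0,
    (-(Rv r₁ r₂ l W0 * sv r₁ r₂ W0 * V1) / l - r₂ * W1 * V0) / Dv r₁ r₂ l W0,
    Rv r₁ r₂ l W0 / l]

variable {r₁ r₂ l W0 W1 V0 V1 : ℝ}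

section params
variable (hr2 : 0 < r₂) (h12 : r₂ ≤ r₁) (hl : r₁ + r₂ < l) (hw : W0 ^ 2 + W1 ^ 2 = 1)

include hr2 h12 hl hw

omit h12 hl in
lemma hs_ub : sv r₁ r₂ W0 ≤ r₁ + r₂ := by
  have : W0 ≤ 1 := by nlinarith
  unfold sv; nlinarith

omit h12 hl in
lemma hs_lb : r₁ - r₂ ≤ sv r₁ r₂ W0 := by
  have : -1 ≤ W0 := by nlinarith
  unfold sv; nlinarith

omit hw in
lemma hl0 : (0:ℝ) < l := by nlinarith

lemma hD2 : Dv r₁ r₂ l W0 ^ 2 = l ^ 2 - sv r₁ r₂ W0 ^ 2 := by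
  have h1 := hs_ub (r₁ := r₁) hr2 hw
  have h2 := hs_lb (r₁ := r₁) hr2 hw
  apply Real.sq_sqrt; nlinarith

lemma hDpos : 0 < Dv r₁ r₂ l W0 := by
  have h1 := hs_ub (r₁ := r₁) hr2 hw
  have h2 := hs_lb (r₁ := r₁) hr2 hw
  apply Real.sqrt_pos.mpr; nlinarith

lemma hR2 : Rv r₁ r₂ l W0 ^ 2 = l ^ 2 - 2 * r₁ * sv r₁ r₂ W0 + r₁ ^ 2 - r₂ ^ 2 := by
  have h1 := hs_ub (r₁ := r₁) hr2 hw
  apply Real.sq_sqrt; nlinarith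

lemma hRpos : 0 < Rv r₁ r₂ l W0 := by
  have h1 := hs_ub (r₁ := r₁) hr2 hw
  apply Real.sqrt_pos.mpr; nlinarith

variable (hv : V0 ^ 2 + V1 ^ 2 = 1)
include hv

lemma mem_F :
    ((uF r₁ r₂ l W0 W1 V0 V1, qF r₁ r₂ l W0 V0 V1) : E3 × E3) ∈
      M r₁ r₂ (EuclideanSpace.single 2 l) := by
  have hr1 : (0:ℝ) < r₁ := lt_of_lt_of_le hr2 h12
  have hL : (0:ℝ) < l := hl0 hr2 h12 hl
  have hD2' := hD2 (r₁ := r₁) (r₂ := r₂) (l := l) (W0 := W0) hr2 h12 hl hw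
  have hR2' := hR2 (r₁ := r₁) (r₂ := r₂) (l := l) (W0 := W0) hr2 h12 hl hw
  have hD : Dv r₁ r₂ l W0 ≠ 0 := (hDpos hr2 h12 hl hw).ne'
  have hLne : l ≠ 0 := hL.ne'
  have hs : sv r₁ r₂ W0 = r₁ + r₂ * W0 := rfl
  have hnormu : ‖uF r₁ r₂ l W0 W1 V0 V1‖ = 1 := by
    rw [norm_eq_iff_sum_sq _ zero_le_one]
    simp only [uF, PiLp.toLp_apply, Fin.sum_univ_three, Matrix.cons_val_zero, Matrix.cons_val_one,
      Matrix.head_cons, Matrix.cons_val_two, Matrix.tail_cons]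
    field_simp
    linear_combination (Rv r₁ r₂ l W0^2*(sv r₁ r₂ W0)^2 + l^2*r₂^2*W1^2)*hv +
      (Rv r₁ r₂ l W0^2 - l^2)*hD2' + l^2*hR2' + r₂^2*l^2*hw +
      l^2*(sv r₁ r₂ W0 - r₁ + r₂*W0)*hs
  refine ⟨hnormu, ?_, ?_, ?_⟩
  · rw [inner_eq_sum]
    simp only [uF, PiLp.toLp_apply, qF, Matrix.cons_val_zero, Matrix.cons_val_one, Matrix.head_cons,
      Matrix.cons_val_two, Matrix.tail_cons]
    field_simp
    linear_combination (-(r₁*Rv r₁ r₂ l W0*(sv r₁ r₂ W0)))*hv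
  · rw [norm_eq_iff_sum_sq _ hr1.le]
    simp only [qF, PiLp.toLp_apply, Fin.sum_univ_three, Matrix.cons_val_zero, Matrix.cons_val_one,
      Matrix.head_cons, Matrix.cons_val_two, Matrix.tail_cons]
    field_simp
    linear_combination (Dv r₁ r₂ l W0^2)*hv + hD2'
  · rw [tangent_iff hnormu hr2.le]
    have hin : ⟪qF r₁ r₂ l W0 V0 V1 - EuclideanSpace.single 2 l, uF r₁ r₂ l W0 W1 V0 V1⟫ =
        -Rv r₁ r₂ l W0 := by
      rw [inner_eq_sum]
      simp only [uF, PiLp.toLp_apply, qF, PiLp.sub_apply, EuclideanSpace.single_apply,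
        Matrix.cons_val_zero, Matrix.cons_val_one, Matrix.head_cons,
        Matrix.cons_val_two, Matrix.tail_cons, Fin.reduceEq, reduceIte]
      norm_num
      field_simp
      linear_combination (-(r₁*Rv r₁ r₂ l W0*(sv r₁ r₂ W0)))*hv
    rw [hin, norm_sq_sum]
    simp only [qF, PiLp.toLp_apply, Fin.sum_univ_three, PiLp.sub_apply, EuclideanSpace.single_apply,
      Matrix.cons_val_zero, Matrix.cons_val_one, Matrix.head_cons,
      Matrix.cons_val_two, Matrix.tail_cons, Fin.reduceEq, reduceIte]
    norm_num
    field_simp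
    linear_combination (r₁^2*Dv r₁ r₂ l W0^2)*hv + r₁^2*hD2' + (-(l^2))*hR2'

end params

lemma mem_neg {c : E3} {u q : E3} (h : (u, q) ∈ M r₁ r₂ c) : (-u, q) ∈ M r₁ r₂ c := by
  obtain ⟨h1, h2, h3, h4⟩ := h
  refine ⟨by simpa using h1, by simpa using h2, h3, ?_⟩
  have : (q - c) - ⟪q - c, -u⟫ • (-u) = (q - c) - ⟪q - c, u⟫ • u := by
    rw [inner_neg_right]; rw [neg_smul, smul_neg, neg_neg]
  rw [this]; exact h4

lemma mem_explicit {u q : E3} (hr1 : 0 ≤ r₁) (hr2 : 0 ≤ r₂)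
    (hp : (u, q) ∈ M r₁ r₂ (EuclideanSpace.single 2 l)) :
    (u 0 ^ 2 + u 1 ^ 2 + u 2 ^ 2 = 1) ∧
    (q 0 * u 0 + q 1 * u 1 + q 2 * u 2 = 0) ∧
    (q 0 ^ 2 + q 1 ^ 2 + q 2 ^ 2 = r₁ ^ 2) ∧
    ((q 0 ^ 2 + q 1 ^ 2 + (q 2 - l) ^ 2) -
      (q 0 * u 0 + q 1 * u 1 + (q 2 - l) * u 2) ^ 2 = r₂ ^ 2) := by
  obtain ⟨h1, h2, h3, h4⟩ := hp
  refine ⟨?_, ?_, ?_, ?_⟩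
  · have := (norm_eq_iff_sum_sq u zero_le_one).mp h1
    simpa [Fin.sum_univ_three] using this
  · rw [inner_eq_sum] at h2; exact h2
  · have := (norm_eq_iff_sum_sq q hr1).mp h3
    simpa [Fin.sum_univ_three] using this
  · have h5 := (tangent_iff h1 hr2).mp h4
    rw [norm_sq_sum, inner_eq_sum] at h5
    simp only [Fin.sum_univ_three, PiLp.sub_apply, EuclideanSpace.single_apply,
      Fin.reduceEq, reduceIte] at h5
    norm_num at h5
    convert h5 using 2 <;> ring


/-! ### Inverse-side algebra -/

section inverse
variable {u0 u1 u2 q0 q1 q2 D' : ℝ}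
variable (hr2 : 0 < r₂) (h12 : r₂ ≤ r₁) (hl : r₁ + r₂ < l)
  (e1 : u0^2+u1^2+u2^2 = 1) (e2 : q0*u0+q1*u1+q2*u2 = 0)
  (e3 : q0^2+q1^2+q2^2 = r₁^2)
  (e4 : (q0^2+q1^2+(q2-l)^2) - (q0*u0+q1*u1+(q2-l)*u2)^2 = r₂^2)

include e2 e3 e4 in
lemma f1 : l^2*u2^2 = l^2 - 2*l*q2 + r₁^2 - r₂^2 := by
  linear_combination (-1)*e4 + e3 + (2*l*u2 - (q0*u0+q1*u1+q2*u2))*e2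

include hr2 h12 hl e2 e3 e4 in
lemma f2 : 0 < l^2*u2^2 := by
  have h1 := f1 (r₁ := r₁) (r₂ := r₂) (l := l) e2 e3 e4
  have hq2sq : q2^2 ≤ r₁^2 := by nlinarith [sq_nonneg q0, sq_nonneg q1]
  have hr1 : (0:ℝ) < r₁ := lt_of_lt_of_le hr2 h12
  have hq2 : q2 ≤ r₁ := by
    rcases le_or_gt q2 r₁ with h | h
    · exact h
    · nlinarith
  have hl0 : (0:ℝ) < l := by linarith
  nlinarith [mul_pos (show (0:ℝ) < l - r₁ - r₂ by linarith)
    (show (0:ℝ) < l - r₁ + r₂ by linarith), mul_le_mul_of_nonneg_left hq2 hl0.le]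

include hr2 h12 hl e2 e3 e4 in
lemma f3 : q2^2 < r₁^2 := by
  have h2 := f2 hr2 h12 hl e2 e3 e4
  rcases lt_or_ge (q2^2) (r₁^2) with h | h
  · exact h
  · exfalso
    have hq0 : q0 = 0 := by nlinarith [sq_nonneg q0, sq_nonneg q1]
    have hq1 : q1 = 0 := by nlinarith [sq_nonneg q0, sq_nonneg q1]
    have hu2 : q2*u2 = 0 := by rw [hq0, hq1] at e2; linarith [e2]
    have hq2ne : q2 ≠ 0 := by
      intro h0; rw [h0] at h
      have hr1 : (0:ℝ) < r₁ := lt_of_lt_of_le hr2 h12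
      nlinarith
    have : u2 = 0 := by
      rcases mul_eq_zero.mp hu2 with h' | h'
      · exact absurd h' hq2ne
      · exact h'
    rw [this] at h2; nlinarith

include hr2 h12 e1 e2 e3 e4 in
lemma g1 : ((l*q2/r₁ - r₁)/r₂)^2 + (l*(u0*q1 - u1*q0)/(r₁*r₂))^2 = 1 := by
  have hf1 := f1 (r₁ := r₁) (r₂ := r₂) (l := l) e2 e3 e4
  have hr1 : (0:ℝ) < r₁ := lt_of_lt_of_le hr2 h12
  have h1 : r₁ ≠ 0 := ne_of_gt hr1
  have h2 : r₂ ≠ 0 := ne_of_gt hr2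
  field_simp
  linear_combination (l^2*(u0^2+u1^2))*e3 + (l^2*(r₁^2-q2^2))*e1 +
    (-(l^2)*(q0*u0+q1*u1-q2*u2))*e2 + (-(r₁^2))*hf1

include hr2 h12 e3 in
lemma g2 (hD'2 : r₁^2*D'^2 = l^2*r₁^2 - l^2*q2^2) (hD' : D' ≠ 0) :
    (l*q0/(r₁*D'))^2 + (l*q1/(r₁*D'))^2 = 1 := by
  have hr1 : (0:ℝ) < r₁ := lt_of_lt_of_le hr2 h12
  have h1 : r₁ ≠ 0 := ne_of_gt hr1
  field_simp
  linear_combination (-1)*hD'2 + (l^2)*e3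

include e2 e3 in
lemma rec_u0 (hD'2 : r₁^2*D'^2 = l^2*r₁^2 - l^2*q2^2)
    (hD' : D' ≠ 0) (hln : l ≠ 0) (hr1n : r₁ ≠ 0) (hr2n : r₂ ≠ 0) :
    (-(l*u2 * (l*q2/r₁) * (l*q0/(r₁*D')))/l + r₂*(l*(u0*q1-u1*q0)/(r₁*r₂))*(l*q1/(r₁*D')))/D' = u0 := by
  field_simp
  linear_combination (-u0)*hD'2 + (l^2*u0)*e3 + (-(l^2)*q0)*e2

include e2 e3 in
lemma rec_u1 (hD'2 : r₁^2*D'^2 = l^2*r₁^2 - l^2*q2^2)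
    (hD' : D' ≠ 0) (hln : l ≠ 0) (hr1n : r₁ ≠ 0) (hr2n : r₂ ≠ 0) :
    (-(l*u2 * (l*q2/r₁) * (l*q1/(r₁*D')))/l - r₂*(l*(u0*q1-u1*q0)/(r₁*r₂))*(l*q0/(r₁*D')))/D' = u1 := by
  field_simp
  linear_combination (-u1)*hD'2 + (l^2*u1)*e3 + (-(l^2)*q1)*e2

end inverse

lemma e3_ext {x y : E3} (h0 : x 0 = y 0) (h1 : x 1 = y 1) (h2 : x 2 = y 2) : x = y := by
  ext i; fin_cases i <;> assumption

/-! ### Surjectivity -/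

lemma surj_plus (hr2 : 0 < r₂) (h12 : r₂ ≤ r₁) (hl : r₁ + r₂ < l)
    {u q : E3} (hp : (u, q) ∈ M r₁ r₂ (EuclideanSpace.single 2 l)) (hu2 : 0 < u 2) :
    ∃ p : Tor, (uF r₁ r₂ l (p.1.1 0) (p.1.1 1) (p.2.1 0) (p.2.1 1),
                qF r₁ r₂ l (p.1.1 0) (p.2.1 0) (p.2.1 1)) = (u, q) := by
  have hr1 : (0:ℝ) < r₁ := lt_of_lt_of_le hr2 h12
  have hL : (0:ℝ) < l := by nlinarith
  obtain ⟨e1, e2, e3, e4⟩ := mem_explicit hr1.le hr2.le hp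
  have hf1 := f1 e2 e3 e4
  have hq2lt := f3 hr2 h12 hl e2 e3 e4
  set D' := Real.sqrt (l^2 - (l * q 2 / r₁)^2) with hD'def
  have hargpos : 0 < l^2 - (l * q 2 / r₁)^2 := by
    rw [div_pow, sub_pos, div_lt_iff₀ (by positivity), mul_pow]
    exact mul_lt_mul_of_pos_left hq2lt (by positivity)
  have hD'pos : 0 < D' := Real.sqrt_pos.mpr hargpos
  have hD'2 : r₁^2*D'^2 = l^2*r₁^2 - l^2*(q 2)^2 := by
    rw [hD'def, Real.sq_sqrt hargpos.le]
    field_simp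
  have hsv : sv r₁ r₂ ((l*q 2/r₁ - r₁)/r₂) = l*q 2/r₁ := by unfold sv; field_simp; ring
  have hDv : Dv r₁ r₂ l ((l*q 2/r₁ - r₁)/r₂) = D' := by unfold Dv; rw [hsv]
  have hargR : l^2 - 2*r₁*(l*q 2/r₁) + r₁^2 - r₂^2 = (l*u 2)^2 := by
    field_simp
    linear_combination (-1)*hf1
  have hRv : Rv r₁ r₂ l ((l*q 2/r₁ - r₁)/r₂) = l*u 2 := by
    unfold Rv; rw [hsv, hargR]; exact Real.sqrt_sq (by positivity)
  refine ⟨(⟨WithLp.toLp 2 ![(l*q 2/r₁ - r₁)/r₂, l*(u 0*q 1 - u 1*q 0)/(r₁*r₂)], ?_⟩,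
          ⟨WithLp.toLp 2 ![l*q 0/(r₁*D'), l*q 1/(r₁*D')], ?_⟩), ?_⟩
  · apply mem_sphere_of_sum_sq
    simp only [PiLp.toLp_apply, Matrix.cons_val_zero, Matrix.cons_val_one, Matrix.head_cons]
    exact g1 hr2 h12 e1 e2 e3 e4
  · apply mem_sphere_of_sum_sq
    simp only [PiLp.toLp_apply, Matrix.cons_val_zero, Matrix.cons_val_one, Matrix.head_cons]
    exact g2 hr2 h12 e3 hD'2 hD'pos.ne'
  · simp only [PiLp.toLp_apply, Matrix.cons_val_zero, Matrix.cons_val_one, Matrix.head_cons]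
    rw [Prod.mk.injEq]
    constructor
    · apply e3_ext
      · show (-(Rv r₁ r₂ l ((l*q 2/r₁ - r₁)/r₂) * sv r₁ r₂ ((l*q 2/r₁ - r₁)/r₂) * (l*q 0/(r₁*D')))/l
            + r₂ * (l*(u 0*q 1 - u 1*q 0)/(r₁*r₂)) * (l*q 1/(r₁*D'))) / Dv r₁ r₂ l ((l*q 2/r₁ - r₁)/r₂) = u 0
        rw [hsv, hDv, hRv]
        exact rec_u0 e2 e3 hD'2 hD'pos.ne' hL.ne' hr1.ne' hr2.ne'
      · show (-(Rv r₁ r₂ l ((l*q 2/r₁ - r₁)/r₂) * sv r₁ r₂ ((l*q 2/r₁ - r₁)/r₂) * (l*q 1/(r₁*D')))/l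
            - r₂ * (l*(u 0*q 1 - u 1*q 0)/(r₁*r₂)) * (l*q 0/(r₁*D'))) / Dv r₁ r₂ l ((l*q 2/r₁ - r₁)/r₂) = u 1
        rw [hsv, hDv, hRv]
        exact rec_u1 e2 e3 hD'2 hD'pos.ne' hL.ne' hr1.ne' hr2.ne'
      · show Rv r₁ r₂ l ((l*q 2/r₁ - r₁)/r₂) / l = u 2
        rw [hRv]; field_simp
    · apply e3_ext
      · show r₁ * Dv r₁ r₂ l ((l*q 2/r₁ - r₁)/r₂) * (l*q 0/(r₁*D')) / l = q 0
        rw [hDv]; field_simp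
      · show r₁ * Dv r₁ r₂ l ((l*q 2/r₁ - r₁)/r₂) * (l*q 1/(r₁*D')) / l = q 1
        rw [hDv]; field_simp
      · show r₁ * sv r₁ r₂ ((l*q 2/r₁ - r₁)/r₂) / l = q 2
        rw [hsv]; field_simp


/-! ### Recovery identities (injectivity) -/

section rec
variable (hr2 : 0 < r₂) (h12 : r₂ ≤ r₁) (hl : r₁ + r₂ < l)
  (hw : W0 ^ 2 + W1 ^ 2 = 1) (hv : V0 ^ 2 + V1 ^ 2 = 1)
include hr2 h12 hl hw

lemma rec_W0 : (l * (qF r₁ r₂ l W0 V0 V1 2) / r₁ - r₁) / r₂ = W0 := by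
  have hr1 : (0:ℝ) < r₁ := lt_of_lt_of_le hr2 h12
  have hL : (0:ℝ) < l := hl0 hr2 h12 hl
  simp only [qF, PiLp.toLp_apply, Matrix.cons_val_two, Matrix.tail_cons, Matrix.head_cons]
  unfold sv
  field_simp
  ring

lemma rec_V0 : l * (qF r₁ r₂ l W0 V0 V1 0) / (r₁ * Dv r₁ r₂ l W0) = V0 := by
  have hr1 : (0:ℝ) < r₁ := lt_of_lt_of_le hr2 h12
  have hL : (0:ℝ) < l := hl0 hr2 h12 hl
  have hD := hDpos hr2 h12 hl hw
  simp only [qF, PiLp.toLp_apply, Matrix.cons_val_zero]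
  field_simp

lemma rec_V1 : l * (qF r₁ r₂ l W0 V0 V1 1) / (r₁ * Dv r₁ r₂ l W0) = V1 := by
  have hr1 : (0:ℝ) < r₁ := lt_of_lt_of_le hr2 h12
  have hL : (0:ℝ) < l := hl0 hr2 h12 hl
  have hD := hDpos hr2 h12 hl hw
  simp only [qF, PiLp.toLp_apply, Matrix.cons_val_one, Matrix.head_cons, Matrix.cons_val_zero]
  field_simp

include hv in
lemma rec_W1 : l * ((uF r₁ r₂ l W0 W1 V0 V1 0) * (qF r₁ r₂ l W0 V0 V1 1) -
    (uF r₁ r₂ l W0 W1 V0 V1 1) * (qF r₁ r₂ l W0 V0 V1 0)) / (r₁ * r₂) = W1 := by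
  have hr1 : (0:ℝ) < r₁ := lt_of_lt_of_le hr2 h12
  have hL : (0:ℝ) < l := hl0 hr2 h12 hl
  have hD := hDpos hr2 h12 hl hw
  simp only [qF, PiLp.toLp_apply, uF, Matrix.cons_val_zero, Matrix.cons_val_one, Matrix.head_cons]
  field_simp
  linear_combination (l*r₂*W1)*hv

end rec

lemma tor_ext {p p' : Tor} (h0 : (p.1 : EuclideanSpace ℝ (Fin 2)) 0 = p'.1.1 0)
    (h1 : (p.1 : EuclideanSpace ℝ (Fin 2)) 1 = p'.1.1 1)
    (h2 : (p.2 : EuclideanSpace ℝ (Fin 2)) 0 = p'.2.1 0)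
    (h3 : (p.2 : EuclideanSpace ℝ (Fin 2)) 1 = p'.2.1 1) : p = p' := by
  obtain ⟨⟨w, hw⟩, ⟨v, hv⟩⟩ := p
  obtain ⟨⟨w', hw'⟩, ⟨v', hv'⟩⟩ := p'
  simp only at h0 h1 h2 h3
  have : w = w' := by ext i; fin_cases i <;> assumption
  have : v = v' := by ext i; fin_cases i <;> assumption
  simp_all

/-- the forward map, raw version -/
def Fp (r₁ r₂ l : ℝ) (p : Tor) : E3 × E3 :=
  (uF r₁ r₂ l (p.1.1 0) (p.1.1 1) (p.2.1 0) (p.2.1 1),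
   qF r₁ r₂ l (p.1.1 0) (p.2.1 0) (p.2.1 1))

lemma inj_core (hr2 : 0 < r₂) (h12 : r₂ ≤ r₁) (hl : r₁ + r₂ < l)
    {p p' : Tor} (h : Fp r₁ r₂ l p = Fp r₁ r₂ l p') : p = p' := by
  have hw := sum_sq_of_sphere p.1.2
  have hv := sum_sq_of_sphere p.2.2
  have hw' := sum_sq_of_sphere p'.1.2
  have hv' := sum_sq_of_sphere p'.2.2
  have hu := congrArg Prod.fst h
  have hq := congrArg Prod.snd h
  simp only [Fp] at hu hq
  have hW0 : (p.1 : EuclideanSpace ℝ (Fin 2)) 0 = p'.1.1 0 := by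
    rw [← rec_W0 hr2 h12 hl hw (V0 := p.2.1 0) (V1 := p.2.1 1),
        ← rec_W0 hr2 h12 hl hw' (V0 := p'.2.1 0) (V1 := p'.2.1 1), hq]
  have hV0 : (p.2 : EuclideanSpace ℝ (Fin 2)) 0 = p'.2.1 0 := by
    rw [← rec_V0 hr2 h12 hl hw (V0 := p.2.1 0) (V1 := p.2.1 1),
        ← rec_V0 hr2 h12 hl hw' (V0 := p'.2.1 0) (V1 := p'.2.1 1), hq, hW0]
  have hV1 : (p.2 : EuclideanSpace ℝ (Fin 2)) 1 = p'.2.1 1 := by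
    rw [← rec_V1 hr2 h12 hl hw (V0 := p.2.1 0) (V1 := p.2.1 1),
        ← rec_V1 hr2 h12 hl hw' (V0 := p'.2.1 0) (V1 := p'.2.1 1), hq, hW0]
  have hW1 : (p.1 : EuclideanSpace ℝ (Fin 2)) 1 = p'.1.1 1 := by
    rw [← rec_W1 hr2 h12 hl hw hv, ← rec_W1 hr2 h12 hl hw' hv', hq, hu]
  exact tor_ext hW0 hW1 hV0 hV1

lemma mem_Fp (hr2 : 0 < r₂) (h12 : r₂ ≤ r₁) (hl : r₁ + r₂ < l) (p : Tor) :
    Fp r₁ r₂ l p ∈ M r₁ r₂ (EuclideanSpace.single 2 l) :=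
  mem_F hr2 h12 hl (sum_sq_of_sphere p.1.2) (sum_sq_of_sphere p.2.2)

lemma Fp_snd_third (hr2 : 0 < r₂) (h12 : r₂ ≤ r₁) (hl : r₁ + r₂ < l) (p : Tor) :
    0 < (Fp r₁ r₂ l p).1 2 := by
  have := hRpos hr2 h12 hl (sum_sq_of_sphere p.1.2)
  have hL := hl0 hr2 h12 hl
  simp only [Fp, uF, PiLp.toLp_apply, Matrix.cons_val_two, Matrix.tail_cons, Matrix.head_cons]
  positivity

/-! ### The key homeomorphism for the axis-aligned centre -/

theorem key (hr2 : 0 < r₂) (h12 : r₂ ≤ r₁) (hl : r₁ + r₂ < l) :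
    Nonempty (↥(M r₁ r₂ (EuclideanSpace.single 2 l)) ≃ₜ (Tor ⊕ Tor)) := by
  classical
  have hr1 : (0:ℝ) < r₁ := lt_of_lt_of_le hr2 h12
  have hL : (0:ℝ) < l := by nlinarith
  set c' : E3 := EuclideanSpace.single 2 l with hc'
  let F : Tor ⊕ Tor → ↥(M r₁ r₂ c') :=
    Sum.elim (fun p => ⟨Fp r₁ r₂ l p, mem_Fp hr2 h12 hl p⟩)
      (fun p => ⟨(-(Fp r₁ r₂ l p).1, (Fp r₁ r₂ l p).2),
        mem_neg (mem_Fp hr2 h12 hl p)⟩)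
  have hinj : Function.Injective F := by
    intro x y hxy
    rcases x with p | p <;> rcases y with p' | p'
    · have h := congrArg Subtype.val hxy
      simp only [F, Sum.elim_inl] at h
      exact congrArg Sum.inl (inj_core hr2 h12 hl h)
    · exfalso
      have h := congrArg (fun z : ↥(M r₁ r₂ c') => (z.1.1) 2) hxy
      simp only [F, Sum.elim_inl, Sum.elim_inr, PiLp.neg_apply] at h
      have h1 := Fp_snd_third hr2 h12 hl p
      have h2 := Fp_snd_third hr2 h12 hl p'
      rw [h] at h1; linarith
    · exfalso
      have h := congrArg (fun z : ↥(M r₁ r₂ c') => (z.1.1) 2) hxy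
      simp only [F, Sum.elim_inl, Sum.elim_inr, PiLp.neg_apply] at h
      have h1 := Fp_snd_third hr2 h12 hl p
      have h2 := Fp_snd_third hr2 h12 hl p'
      rw [← h] at h2; linarith
    · have h := congrArg Subtype.val hxy
      simp only [F, Sum.elim_inr] at h
      rw [Prod.mk.injEq] at h
      exact congrArg Sum.inr (inj_core hr2 h12 hl (Prod.ext (neg_injective h.1) h.2))
  have hsurj : Function.Surjective F := by
    rintro ⟨⟨u, q⟩, hp⟩
    obtain ⟨e1, e2, e3, e4⟩ := mem_explicit hr1.le hr2.le hp
    have hu2 := f2 hr2 h12 hl e2 e3 e4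
    rcases lt_trichotomy (u 2) 0 with hneg | h0 | hpos
    · have hp' : ((-u, q) : E3 × E3) ∈ M r₁ r₂ c' := mem_neg hp
      have hpos' : 0 < (-u : E3) 2 := by
        rw [PiLp.neg_apply]; linarith
      obtain ⟨p, hfe⟩ := surj_plus hr2 h12 hl hp' hpos'
      refine ⟨Sum.inr p, Subtype.ext ?_⟩
      have hfu := congrArg Prod.fst hfe
      have hfq := congrArg Prod.snd hfe
      simp only at hfu hfq
      show ((-(Fp r₁ r₂ l p).1, (Fp r₁ r₂ l p).2) : E3 × E3) = (u, q)
      rw [Prod.mk.injEq]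
      constructor
      · show -(uF r₁ r₂ l (p.1.1 0) (p.1.1 1) (p.2.1 0) (p.2.1 1)) = u
        rw [hfu]; exact neg_neg u
      · exact hfq
    · exfalso; rw [h0] at hu2; simp at hu2
    · obtain ⟨p, hfe⟩ := surj_plus hr2 h12 hl hp hpos
      exact ⟨Sum.inl p, Subtype.ext hfe⟩
  -- continuity
  have cW0 : Continuous fun p : Tor => (p.1 : EuclideanSpace ℝ (Fin 2)) 0 :=
    ((EuclideanSpace.proj (0 : Fin 2)).continuous.comp continuous_subtype_val).comp continuous_fst
  have cW1 : Continuous fun p : Tor => (p.1 : EuclideanSpace ℝ (Fin 2)) 1 :=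
    ((EuclideanSpace.proj (1 : Fin 2)).continuous.comp continuous_subtype_val).comp continuous_fst
  have cV0 : Continuous fun p : Tor => (p.2 : EuclideanSpace ℝ (Fin 2)) 0 :=
    ((EuclideanSpace.proj (0 : Fin 2)).continuous.comp continuous_subtype_val).comp continuous_snd
  have cV1 : Continuous fun p : Tor => (p.2 : EuclideanSpace ℝ (Fin 2)) 1 :=
    ((EuclideanSpace.proj (1 : Fin 2)).continuous.comp continuous_subtype_val).comp continuous_snd
  have csv : Continuous fun p : Tor => sv r₁ r₂ (p.1.1 0) := by
    simp only [sv]; exact continuous_const.add (continuous_const.mul cW0)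
  have cD : Continuous fun p : Tor => Dv r₁ r₂ l (p.1.1 0) := by
    unfold Dv
    exact Real.continuous_sqrt.comp (continuous_const.sub (csv.pow 2))
  have cR : Continuous fun p : Tor => Rv r₁ r₂ l (p.1.1 0) := by
    unfold Rv
    apply Real.continuous_sqrt.comp
    exact ((continuous_const.sub (continuous_const.mul csv)).add continuous_const).sub
      continuous_const
  have hDne : ∀ p : Tor, Dv r₁ r₂ l (p.1.1 0) ≠ 0 :=
    fun p => (hDpos hr2 h12 hl (sum_sq_of_sphere p.1.2)).ne'
  have cu : Continuous fun p : Tor =>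
      uF r₁ r₂ l (p.1.1 0) (p.1.1 1) (p.2.1 0) (p.2.1 1) := by
    refine ((EuclideanSpace.equiv (Fin 3) ℝ).symm.continuous).comp (continuous_pi fun i => ?_)
    fin_cases i
    · simpa only [uF, PiLp.toLp_apply, Fin.zero_eta, Fin.mk_one, Fin.reduceFinMk, Pi.mul_apply, Pi.div_apply,
        Pi.add_apply, Pi.sub_apply, Pi.neg_apply, Pi.mul_def, Pi.div_def, Pi.add_def, Pi.sub_def,
        Matrix.cons_val_zero] using
        ((((cR.mul csv).mul cV0).neg.div_const l).add
          ((continuous_const.mul cW1).mul cV1)).div cD hDne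
    · simpa only [uF, PiLp.toLp_apply, Fin.zero_eta, Fin.mk_one, Fin.reduceFinMk, Pi.mul_apply, Pi.div_apply,
        Pi.add_apply, Pi.sub_apply, Pi.neg_apply, Pi.mul_def, Pi.div_def, Pi.add_def, Pi.sub_def,
        Matrix.cons_val_one, Matrix.head_cons, Matrix.cons_val_zero] using
        ((((cR.mul csv).mul cV1).neg.div_const l).sub
          ((continuous_const.mul cW1).mul cV0)).div cD hDne
    · simpa only [uF, PiLp.toLp_apply, Fin.zero_eta, Fin.mk_one, Fin.reduceFinMk, Pi.mul_apply, Pi.div_apply,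
        Pi.add_apply, Pi.sub_apply, Pi.neg_apply, Matrix.cons_val_two, Matrix.tail_cons, Matrix.head_cons] using
        cR.div_const l
  have cq : Continuous fun p : Tor =>
      qF r₁ r₂ l (p.1.1 0) (p.2.1 0) (p.2.1 1) := by
    refine ((EuclideanSpace.equiv (Fin 3) ℝ).symm.continuous).comp (continuous_pi fun i => ?_)
    fin_cases i
    · simpa only [qF, PiLp.toLp_apply, Fin.zero_eta, Fin.mk_one, Fin.reduceFinMk, Pi.mul_apply, Pi.div_apply,
        Pi.add_apply, Pi.sub_apply, Pi.neg_apply, Matrix.cons_val_zero] using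
        ((continuous_const.mul cD).mul cV0).div_const l
    · simpa only [qF, PiLp.toLp_apply, Fin.zero_eta, Fin.mk_one, Fin.reduceFinMk, Pi.mul_apply, Pi.div_apply,
        Pi.add_apply, Pi.sub_apply, Pi.neg_apply, Matrix.cons_val_one, Matrix.head_cons, Matrix.cons_val_zero] using
        ((continuous_const.mul cD).mul cV1).div_const l
    · simpa only [qF, PiLp.toLp_apply, Fin.zero_eta, Fin.mk_one, Fin.reduceFinMk, Pi.mul_apply, Pi.div_apply,
        Pi.add_apply, Pi.sub_apply, Pi.neg_apply, Matrix.cons_val_two, Matrix.tail_cons, Matrix.head_cons] using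
        (continuous_const.mul csv).div_const l
  have hcF : Continuous F := by
    refine Continuous.sumElim ?_ ?_
    · exact (cu.prodMk cq).subtype_mk _
    · exact ((cu.neg).prodMk cq).subtype_mk _
  let e : (Tor ⊕ Tor) ≃ ↥(M r₁ r₂ c') := Equiv.ofBijective F ⟨hinj, hsurj⟩
  have : Continuous ⇑e := hcF
  exact ⟨(this.homeoOfEquivCompactToT2 (f := e)).symm⟩


/-! ### Conjugation by a linear isometry -/

lemma mem_map (Φ : E3 ≃ₗᵢ[ℝ] E3) {c u q : E3} (h : (u, q) ∈ M r₁ r₂ c) :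
    (Φ u, Φ q) ∈ M r₁ r₂ (Φ c) := by
  obtain ⟨h1, h2, h3, h4⟩ := h
  refine ⟨by rw [Φ.norm_map]; exact h1, by rw [Φ.inner_map_map]; exact h2,
    by rw [Φ.norm_map]; exact h3, ?_⟩
  show ‖(Φ q - Φ c) - ⟪Φ q - Φ c, Φ u⟫ • Φ u‖ = r₂
  rw [← map_sub Φ q c, Φ.inner_map_map, ← map_smul Φ, ← map_sub Φ, Φ.norm_map]
  exact h4

def homeo_conj (r₁ r₂ : ℝ) (c : E3) (Φ : E3 ≃ₗᵢ[ℝ] E3) :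
    ↥(M r₁ r₂ c) ≃ₜ ↥(M r₁ r₂ (Φ c)) := by
  let eH : (E3 × E3) ≃ₜ (E3 × E3) := (Φ.toHomeomorph).prodCongr (Φ.toHomeomorph)
  have him : ⇑eH '' M r₁ r₂ c = M r₁ r₂ (Φ c) := by
    apply Set.ext
    rintro ⟨u', q'⟩
    constructor
    · rintro ⟨⟨u, q⟩, hm, heq⟩
      have heq' : (Φ u, Φ q) = ((u', q') : E3 × E3) := heq
      rw [← heq']
      exact mem_map Φ hm
    · intro hm'
      refine ⟨(Φ.symm u', Φ.symm q'), ?_, ?_⟩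
      · have := mem_map Φ.symm hm'
        rwa [Φ.symm_apply_apply] at this
      · show ((Φ (Φ.symm u'), Φ (Φ.symm q')) : E3 × E3) = (u', q')
        simp
  exact (Homeomorph.image eH (M r₁ r₂ c)).trans (Homeomorph.setCongr him)

lemma exists_basis (c : E3) (hc : ‖c‖ = 1) :
    ∃ b : OrthonormalBasis (Fin 3) ℝ E3, b 2 = c := by
  have horth : Orthonormal ℝ (({2} : Set (Fin 3)).restrict (fun _ : Fin 3 => c)) := by
    constructor
    · intro i; exact hc
    · intro i j hij; exact absurd (Subsingleton.elim i j) hij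
  obtain ⟨b, hb⟩ := Orthonormal.exists_orthonormalBasis_extension_of_card_eq
    (by simp [finrank_euclideanSpace_fin]) horth
  exact ⟨b, hb 2 rfl⟩

theorem main (r₁ r₂ : ℝ) (h12 : r₂ ≤ r₁) (h2 : 0 < r₂)
    (c : E3) (hc : r₁ + r₂ < ‖c‖) :
    Nonempty (↥(M r₁ r₂ c) ≃ₜ (Tor ⊕ Tor)) := by
  have hr1 : (0:ℝ) < r₁ := lt_of_lt_of_le h2 h12
  have hL : (0:ℝ) < ‖c‖ := by nlinarith
  have hc0 : c ≠ 0 := by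
    intro h; rw [h] at hL; simp at hL
  have hunit : ‖(‖c‖⁻¹ • c : E3)‖ = 1 := norm_smul_inv_norm hc0
  obtain ⟨b, hb⟩ := exists_basis _ hunit
  set Φ : E3 ≃ₗᵢ[ℝ] E3 := b.repr with hΦ
  have hΦc : Φ c = EuclideanSpace.single 2 ‖c‖ := by
    have hce : c = ‖c‖ • (‖c‖⁻¹ • c) := (smul_inv_smul₀ hL.ne' c).symm
    have step : Φ c = ‖c‖ • (EuclideanSpace.single 2 (1:ℝ)) := by
      calc Φ c = Φ (‖c‖ • (‖c‖⁻¹ • c)) := by rw [← hce]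
        _ = ‖c‖ • Φ (‖c‖⁻¹ • c) := map_smul _ _ _
        _ = ‖c‖ • (EuclideanSpace.single 2 (1:ℝ)) := by rw [← hb, hΦ, b.repr_self]
    rw [step]
    ext j
    simp only [PiLp.smul_apply, EuclideanSpace.single_apply, smul_eq_mul]
    by_cases h : j = 2 <;> simp [h]
  obtain ⟨h2'⟩ := key (l := ‖c‖) h2 h12 hc
  exact ⟨((homeo_conj r₁ r₂ c Φ).trans
    (Homeomorph.setCongr (congrArg (M r₁ r₂) hΦc))).trans h2'⟩

end

end Stmt16

open scoped RealInnerProductSpace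

/-- If ‖c‖ > r₁ + r₂ (disjoint spheres lying outside one another), the set of oriented
common tangent lines to the two spheres (a line being encoded by its unit direction u and
the point q of the line closest to the origin) is homeomorphic to the disjoint union of
two copies of the 2-torus S¹ × S¹. -/
theorem stmt16 (r₁ r₂ : ℝ) (h12 : r₁ ≥ r₂) (h2 : 0 < r₂)
    (c : EuclideanSpace ℝ (Fin 3)) (hc : r₁ + r₂ < ‖c‖) :
    Nonempty
      ((({p : EuclideanSpace ℝ (Fin 3) × EuclideanSpace ℝ (Fin 3) |
          ‖p.1‖ = 1 ∧ ⟪p.2, p.1⟫ = 0 ∧ ‖p.2‖ = r₁ ∧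
            ‖(p.2 - c) - ⟪p.2 - c, p.1⟫ • p.1‖ = r₂} :
          Set (EuclideanSpace ℝ (Fin 3) × EuclideanSpace ℝ (Fin 3)))) ≃ₜ
        ((Metric.sphere (0 : EuclideanSpace ℝ (Fin 2)) 1 ×
            Metric.sphere (0 : EuclideanSpace ℝ (Fin 2)) 1) ⊕
          (Metric.sphere (0 : EuclideanSpace ℝ (Fin 2)) 1 ×
            Metric.sphere (0 : EuclideanSpace ℝ (Fin 2)) 1))) :=
  Stmt16.main r₁ r₂ h12 h2 c hc
end
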